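/- Let Q and B be real n×n matrices with Q symmetric positive semidefinite, and let f_X(t) = ∫₀ᵗ |Q^{1/2} e^{sBᵀ} X|² ds for X ∈ ℝⁿ. Then for every integer k ≥ 0 and every X ∈ ℝⁿ: the derivatives f_X^{(l)}(0) vanish for all 0 ≤ l ≤ 2k+1 if and only if X belongs to the intersection of the kernels Ker(Q^{1/2}(Bᵀ)ʲ) for j = 0,...,k. -/

import Mathlib

open Matrix intervalIntegral

/-- The square root of a positive semidefinite matrix, as defined in Mathlib (Dec 2024). -/
noncomputable def Matrix.PosSemidef.sqrt {n : Type*} [Fintype n] [DecidableEq n]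
    {A : Matrix n n ℝ} (hA : A.PosSemidef) : Matrix n n ℝ :=
  hA.1.eigenvectorUnitary.1 * diagonal ((↑) ∘ (fun x => √x) ∘ hA.1.eigenvalues) *
    (star hA.1.eigenvectorUnitary : Matrix n n ℝ)

section Stmt1Aux
open NormedSpace
attribute [local instance] Matrix.linftyOpNormedRing Matrix.linftyOpNormedAlgebra

variable {n : ℕ}

private noncomputable def w (A M : Matrix (Fin n) (Fin n) ℝ) (X : Fin n → ℝ) (m : ℕ) (s : ℝ) :
    Fin n → ℝ := ((A * M ^ m) * exp (s • M)).mulVec X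

private noncomputable def L (C : Matrix (Fin n) (Fin n) ℝ) (X : Fin n → ℝ) :
    Matrix (Fin n) (Fin n) ℝ →ₗ[ℝ] (Fin n → ℝ) where
  toFun P := (C * P).mulVec X
  map_add' P P' := by simp [Matrix.mul_add, Matrix.add_mulVec]
  map_smul' a P := by
    simp [Matrix.mul_smul, Matrix.smul_mulVec]

private lemma w_hasDerivAt (A M : Matrix (Fin n) (Fin n) ℝ) (X : Fin n → ℝ) (m : ℕ) (s : ℝ) :
    HasDerivAt (fun s => w A M X m s) (w A M X (m + 1) s) s := by
  have h := hasDerivAt_exp_smul_const (𝕂 := ℝ) M s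
  have hc : Commute (exp (s • M)) M := (Commute.refl M).smul_left s |>.exp_left
  have h2 := ((L (A * M ^ m) X).toContinuousLinearMap.hasFDerivAt).comp_hasDerivAt s h
  have hval : (L (A * M ^ m) X) (exp (s • M) * M) = w A M X (m + 1) s := by
    simp only [L, w, LinearMap.coe_mk, AddHom.coe_mk]
    rw [hc.eq, ← Matrix.mul_assoc, Matrix.mul_assoc A, ← pow_succ]
  rw [← hval]
  exact h2

private lemma dot_hasDerivAt (A M : Matrix (Fin n) (Fin n) ℝ) (X : Fin n → ℝ) (a b : ℕ)
    (s : ℝ) :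
    HasDerivAt (fun s => w A M X a s ⬝ᵥ w A M X b s)
      (w A M X (a+1) s ⬝ᵥ w A M X b s + w A M X a s ⬝ᵥ w A M X (b+1) s) s := by
  have comp : ∀ (m : ℕ) (i : Fin n),
      HasDerivAt (fun s => w A M X m s i) (w A M X (m+1) s i) s := fun m i =>
    (ContinuousLinearMap.proj (R := ℝ) (φ := fun _ : Fin n => ℝ) i).hasFDerivAt.comp_hasDerivAt
      s (w_hasDerivAt A M X m s)
  have H := HasDerivAt.fun_sum (u := Finset.univ)
    (fun i (_ : i ∈ Finset.univ) => ((comp a i).mul (comp b i)))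
  simpa [dotProduct, Finset.sum_add_distrib] using H

private lemma key (P : ℕ → ℕ → ℝ) (l : ℕ) :
    ∑ m ∈ Finset.range (l+1), (l.choose m : ℝ) * (P (m+1) (l-m) + P m (l-m+1))
    = ∑ m ∈ Finset.range (l+2), ((l+1).choose m : ℝ) * P m (l+1-m) := by
  have h2 : ∑ m ∈ Finset.range (l+1), (l.choose m : ℝ) * P m (l-m+1)
      = ∑ m ∈ Finset.range (l+1), (l.choose (m+1) : ℝ) * P (m+1) (l-m) + P 0 (l+1) := by
    rw [Finset.sum_range_succ' (fun m => (l.choose m : ℝ) * P m (l-m+1)) l,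
      Finset.sum_range_succ (fun m => (l.choose (m+1) : ℝ) * P (m+1) (l-m)) l]
    simp only [Nat.choose_succ_self, Nat.cast_zero, zero_mul, add_zero, Nat.choose_zero_right,
      Nat.cast_one, one_mul, Nat.sub_zero]
    congr 1
    apply Finset.sum_congr rfl
    intro m hm
    have : l - (m+1) + 1 = l - m := by
      have := Finset.mem_range.mp hm; omega
    rw [this]
  rw [Finset.sum_range_succ' (fun m => ((l+1).choose m : ℝ) * P m (l+1-m)) (l+1)]
  simp only [mul_add, Finset.sum_add_distrib, h2, Nat.succ_sub_succ, Nat.choose_succ_succ',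
    Nat.cast_add, add_mul, Nat.choose_zero_right, Nat.cast_one, one_mul, Nat.sub_zero]
  ring

private lemma iter_formula (A M : Matrix (Fin n) (Fin n) ℝ) (X : Fin n → ℝ) (l : ℕ) :
    iteratedDeriv l (fun s => w A M X 0 s ⬝ᵥ w A M X 0 s) =
      fun s => ∑ m ∈ Finset.range (l+1),
        (l.choose m : ℝ) * (w A M X m s ⬝ᵥ w A M X (l-m) s) := by
  induction l with
  | zero => funext s; simp
  | succ l ih =>
    rw [iteratedDeriv_succ, ih]
    funext s
    have H : HasDerivAt (fun s => ∑ m ∈ Finset.range (l+1),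
          (l.choose m : ℝ) * (w A M X m s ⬝ᵥ w A M X (l-m) s))
        (∑ m ∈ Finset.range (l+1), (l.choose m : ℝ) *
          (w A M X (m+1) s ⬝ᵥ w A M X (l-m) s + w A M X m s ⬝ᵥ w A M X (l-m+1) s)) s :=
      HasDerivAt.fun_sum fun m _ => (dot_hasDerivAt A M X m (l-m) s).const_mul _
    rw [H.deriv]
    exact key (fun a b => w A M X a s ⬝ᵥ w A M X b s) l

private theorem stmt1_core {n : ℕ} (Q B : Matrix (Fin n) (Fin n) ℝ) (hQ : Q.PosSemidef) :
    ∀ (k : ℕ) (X : Fin n → ℝ),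
      (∀ l ≤ 2 * k + 1,
          iteratedDeriv l
            (fun t : ℝ => ∫ s in (0:ℝ)..t,
              (hQ.sqrt.mulVec ((NormedSpace.exp (s • Bᵀ)).mulVec X)) ⬝ᵥ
                (hQ.sqrt.mulVec ((NormedSpace.exp (s • Bᵀ)).mulVec X))) 0 = 0) ↔
        (∀ j ≤ k, (hQ.sqrt * Bᵀ ^ j).mulVec X = 0) := by
  intro k X
  set A := hQ.sqrt with hA
  set M := Bᵀ with hM
  have hw0 : ∀ s : ℝ, A.mulVec ((exp (s • M)).mulVec X) = w A M X 0 s := by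
    intro s; simp [w, Matrix.mulVec_mulVec]
  have hgc : Continuous (fun s : ℝ => w A M X 0 s ⬝ᵥ w A M X 0 s) :=
    continuous_iff_continuousAt.mpr fun s => (dot_hasDerivAt A M X 0 0 s).continuousAt
  have hderiv : deriv (fun t : ℝ => ∫ s in (0:ℝ)..t, w A M X 0 s ⬝ᵥ w A M X 0 s)
      = fun t => w A M X 0 t ⬝ᵥ w A M X 0 t := by
    funext t; exact Continuous.deriv_integral _ hgc 0 t
  have c0 : ∀ m : ℕ, w A M X m 0 = (A * M ^ m).mulVec X := by
    intro m; simp [w]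
  have hiter : ∀ l : ℕ, iteratedDeriv (l+1)
      (fun t : ℝ => ∫ s in (0:ℝ)..t, w A M X 0 s ⬝ᵥ w A M X 0 s) 0
      = ∑ m ∈ Finset.range (l+1), (l.choose m : ℝ)
          * ((A * M ^ m).mulVec X ⬝ᵥ (A * M ^ (l-m)).mulVec X) := by
    intro l
    rw [iteratedDeriv_succ', hderiv, iter_formula]
    simp [c0]
  simp only [hw0]
  constructor
  · intro h j
    induction j using Nat.strong_induction_on with
    | _ j ihj =>
    intro hj
    have h1 := h (2*j+1) (by omega)
    rw [hiter (2*j)] at h1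
    have hsum : ∑ m ∈ Finset.range (2*j+1), ((2*j).choose m : ℝ)
          * ((A * M ^ m).mulVec X ⬝ᵥ (A * M ^ (2*j-m)).mulVec X)
        = ((2*j).choose j : ℝ) * ((A * M ^ j).mulVec X ⬝ᵥ (A * M ^ j).mulVec X) := by
      rw [Finset.sum_eq_single j]
      · rw [show 2*j - j = j by omega]
      · intro m hm hmj
        rcases lt_or_gt_of_ne hmj with hlt | hgt
        · rw [ihj m hlt (by omega), zero_dotProduct, mul_zero]
        · have hlt2 : 2*j - m < j := by have := Finset.mem_range.mp hm; omega
          rw [ihj _ hlt2 (by omega), dotProduct_zero, mul_zero]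
      · intro hj'; exact absurd (Finset.mem_range.mpr (by omega)) hj'
    rw [hsum] at h1
    have hpos : (0:ℝ) < ((2*j).choose j : ℝ) := by
      exact_mod_cast Nat.choose_pos (by omega)
    rcases mul_eq_zero.mp h1 with h' | h'
    · exact absurd h' (ne_of_gt hpos)
    · exact dotProduct_self_eq_zero.mp h'
  · intro h l hl
    match l, hl with
    | 0, _ => simp
    | (r+1), hl =>
      rw [hiter r]
      apply Finset.sum_eq_zero
      intro m hm
      by_cases hmk : m ≤ k
      · rw [h m hmk, zero_dotProduct, mul_zero]
      · have hrm : r - m ≤ k := by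
          have := Finset.mem_range.mp hm; omega
        rw [h _ hrm, dotProduct_zero, mul_zero]

end Stmt1Aux

/-- with `f_X(t) = ∫₀ᵗ |Q^{1/2} e^{sBᵀ} X|² ds`, for every `k ≥ 0` and every
`X ∈ ℝⁿ`, the derivatives `f_X^{(l)}(0)` vanish for all `0 ≤ l ≤ 2k+1` if and only if `X`
belongs to `⋂_{j=0}^{k} Ker (Q^{1/2}(Bᵀ)ʲ)`. -/
theorem stmt1 {n : ℕ} (Q B : Matrix (Fin n) (Fin n) ℝ) (hQ : Q.PosSemidef) :
    ∀ (k : ℕ) (X : Fin n → ℝ),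
      (∀ l ≤ 2 * k + 1,
          iteratedDeriv l
            (fun t : ℝ => ∫ s in (0:ℝ)..t,
              (hQ.sqrt.mulVec ((NormedSpace.exp (s • Bᵀ)).mulVec X)) ⬝ᵥ
                (hQ.sqrt.mulVec ((NormedSpace.exp (s • Bᵀ)).mulVec X))) 0 = 0) ↔
        (∀ j ≤ k, (hQ.sqrt * Bᵀ ^ j).mulVec X = 0) :=
  stmt1_core Q B hQ
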